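/- Let P, Q : ℂ² → ℂ² be polynomial maps with J(P) identically equal to 1 and P ∘ Q = P. If Q has a fixed point, i.e., there exists (a,b) ∈ ℂ² with Q(a,b) = (a,b), then Q is the identity map. -/

import Mathlib

open MvPolynomial

lemma hasStrictFDerivAt_eval_mv {n : ℕ} (p : MvPolynomial (Fin n) ℂ) (a : Fin n → ℂ) :
    HasStrictFDerivAt (fun z => eval z p)
      (∑ j, eval a (pderiv j p) • (ContinuousLinearMap.proj j : (Fin n → ℂ) →L[ℂ] ℂ)) a := by
  induction p using MvPolynomial.induction_on with
  | C c =>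
      have hd : (∑ j, eval a (pderiv j (C c : MvPolynomial (Fin n) ℂ)) •
          (ContinuousLinearMap.proj j : (Fin n → ℂ) →L[ℂ] ℂ)) = 0 := by
        ext v; simp [pderiv_C]
      rw [hd]
      simp only [eval_C]
      exact hasStrictFDerivAt_const _ _
  | add p q hp hq =>
      have hd : (∑ j, eval a (pderiv j (p + q)) •
            (ContinuousLinearMap.proj j : (Fin n → ℂ) →L[ℂ] ℂ))
          = (∑ j, eval a (pderiv j p) • (ContinuousLinearMap.proj j : (Fin n → ℂ) →L[ℂ] ℂ))
            + ∑ j, eval a (pderiv j q) • (ContinuousLinearMap.proj j : (Fin n → ℂ) →L[ℂ] ℂ) := by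
        ext v; simp [add_mul, Finset.sum_add_distrib]
      rw [hd]
      simp only [map_add]
      exact hp.add hq
  | mul_X p i hp =>
      have hXi : HasStrictFDerivAt (fun z : Fin n → ℂ => z i)
          (ContinuousLinearMap.proj i : (Fin n → ℂ) →L[ℂ] ℂ) a :=
        (ContinuousLinearMap.proj (R := ℂ) (φ := fun _ : Fin n => ℂ) i).hasStrictFDerivAt
      have h := hp.mul hXi
      have hgoalf : (fun z : Fin n → ℂ => eval z (p * X i))
          = fun z => eval z p * z i := by funext z; simp
      have hd : (∑ j, eval a (pderiv j (p * X i)) •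
            (ContinuousLinearMap.proj j : (Fin n → ℂ) →L[ℂ] ℂ))
          = eval a p • (ContinuousLinearMap.proj i : (Fin n → ℂ) →L[ℂ] ℂ)
            + a i • ∑ j, eval a (pderiv j p) •
              (ContinuousLinearMap.proj j : (Fin n → ℂ) →L[ℂ] ℂ) := by
        ext v
        simp only [ContinuousLinearMap.coe_sum', Finset.sum_apply,
          ContinuousLinearMap.coe_smul', Pi.smul_apply, ContinuousLinearMap.proj_apply,
          ContinuousLinearMap.add_apply, pderiv_mul, pderiv_X, map_add, eval_mul, eval_X,
          smul_eq_mul, Finset.mul_sum, add_mul]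
        rw [Finset.sum_add_distrib, add_comm]
        congr 1
        · rw [Finset.sum_eq_single i]
          · simp
          · intro j _ hji
            simp [Pi.single_eq_of_ne hji.symm]
          · simp
        · exact Finset.sum_congr rfl fun j _ => by ring
      rw [hgoalf, hd]
      exact h

/-- Lemma 6: let `P, Q : ℂ² → ℂ²` be polynomial maps with `J(P) ≡ 1` and `P ∘ Q = P`.
If `Q` has a fixed point, then `Q` is the identity map. -/
theorem fixed_point_implies_identity
    (F G : Fin 2 → MvPolynomial (Fin 2) ℂ)
    (hJ : (Matrix.of fun i j : Fin 2 => MvPolynomial.pderiv j (F i)).det = 1)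
    (hPQ : ∀ z : Fin 2 → ℂ,
      (fun i => eval (fun j => eval z (G j)) (F i)) = fun i => eval z (F i))
    (hfix : ∃ z : Fin 2 → ℂ, (fun i => eval z (G i)) = z) :
    ∀ z : Fin 2 → ℂ, (fun i => eval z (G i)) = z := by
  obtain ⟨a, ha⟩ := hfix
  set 𝔾 : (Fin 2 → ℂ) → (Fin 2 → ℂ) := fun z i => eval z (G i) with h𝔾
  set 𝔽 : (Fin 2 → ℂ) → (Fin 2 → ℂ) := fun z i => eval z (F i) with h𝔽
  -- the Jacobian matrix of F at a
  set M : Matrix (Fin 2) (Fin 2) ℂ := Matrix.of fun i j => eval a (pderiv j (F i)) with hM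
  have hdet : M.det = 1 := by
    have := congrArg (eval a) hJ
    rw [RingHom.map_det] at this
    have h2 : M = (Matrix.of fun i j => pderiv j (F i)).map (eval a) := by ext i j; simp [hM]
    rw [h2]
    simpa using this
  have hMinv : Invertible M := M.invertibleOfIsUnitDet (by rw [hdet]; exact isUnit_one)
  set e : (Fin 2 → ℂ) ≃L[ℂ] (Fin 2 → ℂ) :=
    (M.toLinearEquiv' hMinv).toContinuousLinearEquiv with he
  -- F has strict derivative e at a
  have hF : HasStrictFDerivAt 𝔽 (e : (Fin 2 → ℂ) →L[ℂ] (Fin 2 → ℂ)) a := by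
    have hpi : HasStrictFDerivAt 𝔽
        (ContinuousLinearMap.pi fun i => ∑ j, eval a (pderiv j (F i)) •
          (ContinuousLinearMap.proj j : (Fin 2 → ℂ) →L[ℂ] ℂ)) a :=
      hasStrictFDerivAt_pi.2 fun i => hasStrictFDerivAt_eval_mv (F i) a
    have : (ContinuousLinearMap.pi fun i => ∑ j, eval a (pderiv j (F i)) •
          (ContinuousLinearMap.proj j : (Fin 2 → ℂ) →L[ℂ] ℂ))
        = (e : (Fin 2 → ℂ) →L[ℂ] (Fin 2 → ℂ)) := by
      ext v i
      have : (e : (Fin 2 → ℂ) →L[ℂ] (Fin 2 → ℂ)) v = Matrix.toLin' M v := by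
        show (M.toLinearEquiv' hMinv) v = Matrix.toLin' M v
        exact LinearMap.congr_fun (M.toLinearEquiv'_apply hMinv) v
      rw [this]
      simp [Matrix.toLin'_apply, Matrix.mulVec, dotProduct, hM]
    rw [← this]
    exact hpi
  -- local left inverse
  have h1 := hF.eventually_left_inverse
  have hGa : 𝔾 a = a := ha
  have hGcont : ContinuousAt 𝔾 a := by
    apply continuousAt_pi.2
    intro i
    exact (MvPolynomial.continuous_eval (p := G i)).continuousAt
  have hGtend : Filter.Tendsto 𝔾 (nhds a) (nhds a) := by
    simpa [hGa] using hGcont.tendsto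
  have h2 := hGtend.eventually h1
  have heq : 𝔾 =ᶠ[nhds a] id := by
    filter_upwards [h1, h2] with z hz1 hz2
    have hcomp : 𝔽 (𝔾 z) = 𝔽 z := hPQ z
    calc 𝔾 z = hF.localInverse 𝔽 _ a (𝔽 (𝔾 z)) := hz2.symm
    _ = hF.localInverse 𝔽 _ a (𝔽 z) := by rw [hcomp]
    _ = z := hz1
  -- identity principle, componentwise
  have hGanalytic : ∀ i : Fin 2, AnalyticOnNhd ℂ (fun z : Fin 2 → ℂ => eval z (G i)) Set.univ :=
    fun i => AnalyticOnNhd.eval_mvPolynomial (G i)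
  have hIdAnalytic : ∀ i : Fin 2, AnalyticOnNhd ℂ (fun z : Fin 2 → ℂ => z i) Set.univ :=
    fun i z _ => ((ContinuousLinearMap.proj (R := ℂ) (φ := fun _ : Fin 2 => ℂ) i)).analyticAt z
  have hfin : ∀ i : Fin 2, (fun z : Fin 2 → ℂ => eval z (G i)) = fun z => z i := by
    intro i
    apply AnalyticOnNhd.eq_of_eventuallyEq (hGanalytic i) (hIdAnalytic i) (z₀ := a)
    filter_upwards [heq] with z hz
    exact congrFun hz i
  intro z
  funext i
  exact congrFun (hfin i) z
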